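/- (Deterministic lower bound underlying Lemma 2.10, alternative case.) For every k > 0, m > 0, τ > 0, r ≥ 1 and f ≥ 0, the F Bayes factor satisfies BF₁₀(f|τ²,r) ≥ (1+τ²)^{−(k/2+r)} · exp( (k+m) k f τ² / (2 (m+kf)(1+τ²)) ). (Indeed (k/2+r)_i ≥ (k/2)_i and ((k+m)/2)_i ≥ ((k+m)/2)^i for all i, so the ₂F₁ series is bounded below term by term by the exponential series.) -/

import Mathlib

open Real MeasureTheory Filter

/-- Rising factorial (Pochhammer symbol) `(a)_k`. -/
noncomputable def risingFac (a : ℝ) (k : ℕ) : ℝ := (ascPochhammer ℝ k).eval a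

/-- Gaussian hypergeometric function `₂F₁(a, b, c; x)` (as a series). -/
noncomputable def twoF1 (a b c x : ℝ) : ℝ :=
  ∑' k : ℕ, (risingFac a k * risingFac b k / (risingFac c k * (Nat.factorial k : ℝ))) * x ^ k

/-- `F` Bayes factor `BF₁₀(f | τ², r)` with `(k, m)` degrees of freedom,
as a function of `τ² = τsq`. -/
noncomputable def BF10F (f τsq r k m : ℝ) : ℝ :=
  (1 + τsq) ^ (-(k / 2 + r)) *
    twoF1 (k / 2 + r) ((k + m) / 2) (k / 2) (k * f * τsq / ((1 + τsq) * (m + k * f)))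

lemma risingFac_zero (a : ℝ) : risingFac a 0 = 1 := by
  simp [risingFac]

lemma risingFac_succ (a : ℝ) (n : ℕ) : risingFac a (n + 1) = risingFac a n * (a + n) := by
  simp [risingFac, ascPochhammer_succ_right]

lemma risingFac_pos {a : ℝ} (ha : 0 < a) (n : ℕ) : 0 < risingFac a n := by
  induction n with
  | zero => simp [risingFac_zero]
  | succ n ih =>
      rw [risingFac_succ]
      have : (0:ℝ) < a + n := by positivity
      positivity

lemma risingFac_le {a c : ℝ} (hc : 0 < c) (hca : c ≤ a) (n : ℕ) :
    risingFac c n ≤ risingFac a n := by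
  induction n with
  | zero => simp [risingFac_zero]
  | succ n ih =>
      rw [risingFac_succ, risingFac_succ]
      have h1 := risingFac_pos hc n
      have h2 : (0:ℝ) ≤ c + n := by positivity
      have : c + n ≤ a + n := by linarith
      nlinarith

lemma pow_le_risingFac {b : ℝ} (hb : 0 < b) (n : ℕ) : b ^ n ≤ risingFac b n := by
  induction n with
  | zero => simp [risingFac_zero]
  | succ n ih =>
      rw [risingFac_succ, pow_succ]
      have h1 : (0:ℝ) < b ^ n := by positivity
      have h2 : b ≤ b + n := le_add_of_nonneg_right (Nat.cast_nonneg n)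
      nlinarith [risingFac_pos hb n]

lemma exp_le_twoF1 {a b c x : ℝ} (hc : 0 < c) (hca : c ≤ a) (hb : 0 < b)
    (hx0 : 0 ≤ x) (hx1 : x < 1) : Real.exp (b * x) ≤ twoF1 a b c x := by
  have ha : 0 < a := lt_of_lt_of_le hc hca
  set g : ℕ → ℝ := fun n =>
    risingFac a n * risingFac b n / (risingFac c n * (Nat.factorial n : ℝ)) * x ^ n with hg
  have hgnn : ∀ n, 0 ≤ g n := by
    intro n
    have := risingFac_pos ha n
    have := risingFac_pos hb n
    have := risingFac_pos hc n
    have : (0:ℝ) < (Nat.factorial n : ℝ) := by positivity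
    positivity
  -- ratio recurrence
  have hrec : ∀ n : ℕ, g (n + 1) = g n * (x * ((a + n) / ((n : ℝ) + 1)) * ((b + n) / (c + n))) := by
    intro n
    have h1 := risingFac_pos hc n
    have h2 : (0:ℝ) < (Nat.factorial n : ℝ) := by positivity
    have h3 : (0:ℝ) < c + n := by positivity
    have h4 : (0:ℝ) < (n : ℝ) + 1 := by positivity
    simp only [hg, risingFac_succ, Nat.factorial_succ, Nat.cast_mul, pow_succ,
      Nat.cast_add, Nat.cast_one]
    field_simp
  -- ratio tends to x < 1
  have htend : Tendsto (fun n : ℕ => x * ((a + n) / ((n : ℝ) + 1)) * ((b + n) / (c + n)))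
      atTop (nhds (x * 1 * 1)) := by
    have t1 : Tendsto (fun n : ℕ => (a + n) / ((n : ℝ) + 1)) atTop (nhds 1) := by
      have : (fun n : ℕ => (a + n) / ((n : ℝ) + 1)) =
          fun n : ℕ => 1 + (a - 1) / ((n : ℝ) + 1) := by
        funext n
        have h4 : (0:ℝ) < (n : ℝ) + 1 := by positivity
        field_simp
        ring
      rw [this]
      have hdiv : Tendsto (fun n : ℕ => (a - 1) / ((n : ℝ) + 1)) atTop (nhds 0) :=
        Filter.Tendsto.div_atTop tendsto_const_nhds
          (Filter.tendsto_atTop_add_const_right atTop 1 (tendsto_natCast_atTop_atTop (R := ℝ)))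
      simpa using tendsto_const_nhds.add hdiv
    have t2 : Tendsto (fun n : ℕ => (b + n) / (c + n)) atTop (nhds 1) := by
      have : ∀ᶠ n : ℕ in atTop, (b + n) / (c + n) = 1 + (b - c) / (c + n) := by
        filter_upwards [] with n
        have h3 : (0:ℝ) < c + n := by positivity
        field_simp
        ring
      rw [Filter.tendsto_congr' this]
      have hdiv : Tendsto (fun n : ℕ => (b - c) / (c + (n : ℝ))) atTop (nhds 0) :=
        Filter.Tendsto.div_atTop tendsto_const_nhds
          (Filter.tendsto_atTop_add_const_left atTop c (tendsto_natCast_atTop_atTop (R := ℝ)))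
      simpa using tendsto_const_nhds.add hdiv
    exact (tendsto_const_nhds.mul t1).mul t2
  rw [mul_one, mul_one] at htend
  have hsum : Summable g := by
    apply summable_of_ratio_norm_eventually_le (r := (1 + x) / 2) (by linarith)
    have hev : ∀ᶠ n : ℕ in atTop,
        x * ((a + n) / ((n : ℝ) + 1)) * ((b + n) / (c + n)) ≤ (1 + x) / 2 :=
      htend.eventually_le_const (by linarith)
    filter_upwards [hev] with n hn
    rw [Real.norm_of_nonneg (hgnn _), Real.norm_of_nonneg (hgnn _), hrec]
    rw [mul_comm ((1 + x) / 2)]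
    exact mul_le_mul_of_nonneg_left hn (hgnn n)
  -- termwise bound
  have hterm : ∀ n : ℕ, (b * x) ^ n / (Nat.factorial n : ℝ) ≤ g n := by
    intro n
    have hfac : (0:ℝ) < (Nat.factorial n : ℝ) := by positivity
    have hxp : (0:ℝ) ≤ x ^ n := by positivity
    have h1 : b ^ n ≤ risingFac b n := pow_le_risingFac hb n
    have h2 : risingFac c n ≤ risingFac a n := risingFac_le hc hca n
    have hcpos := risingFac_pos hc n
    have hbpos := risingFac_pos hb n
    have : (b * x) ^ n / (Nat.factorial n : ℝ) = b ^ n * x ^ n / (Nat.factorial n : ℝ) := by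
      rw [mul_pow]
    rw [this]
    show _ ≤ risingFac a n * risingFac b n / (risingFac c n * (Nat.factorial n : ℝ)) * x ^ n
    rw [div_mul_eq_mul_div, div_le_div_iff₀ (by positivity) (by positivity)]
    have hb1 : b ^ n * x ^ n ≤ risingFac b n * x ^ n := by
      exact mul_le_mul_of_nonneg_right h1 hxp
    have hb2 : risingFac b n * x ^ n * risingFac c n ≤
        risingFac a n * risingFac b n * x ^ n := by
      have := mul_le_mul_of_nonneg_left h2 (mul_nonneg hbpos.le hxp)
      nlinarith
    calc b ^ n * x ^ n * (risingFac c n * (Nat.factorial n : ℝ))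
        = b ^ n * x ^ n * risingFac c n * (Nat.factorial n : ℝ) := by ring
      _ ≤ risingFac a n * risingFac b n * x ^ n * (Nat.factorial n : ℝ) := by
          have := mul_le_mul_of_nonneg_right h1 (mul_nonneg hxp hcpos.le)
          nlinarith
      _ = risingFac a n * risingFac b n * x ^ n * (Nat.factorial n : ℝ) := rfl
  -- exp as a series
  have hexp : Real.exp (b * x) = ∑' n : ℕ, (b * x) ^ n / (Nat.factorial n : ℝ) := by
    rw [Real.exp_eq_exp_ℝ, NormedSpace.exp_eq_tsum_div]
  rw [hexp, twoF1]
  exact Summable.tsum_le_tsum hterm (Real.summable_pow_div_factorial (b * x)) hsum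

/-- Deterministic lower bound underlying Lemma 2.10, alternative case. -/
theorem lemma210_alternative_lower_bound (k m τ r f : ℝ) (hk : 0 < k) (hm : 0 < m)
    (hτ : 0 < τ) (hr : 1 ≤ r) (hf : 0 ≤ f) :
    (1 + τ ^ 2) ^ (-(k / 2 + r)) *
        Real.exp ((k + m) * k * f * τ ^ 2 / (2 * (m + k * f) * (1 + τ ^ 2)))
      ≤ BF10F f (τ ^ 2) r k m := by
  have hτ2 : (0:ℝ) < τ ^ 2 := by positivity
  have hden : (0:ℝ) < (1 + τ ^ 2) * (m + k * f) := by positivity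
  set x : ℝ := k * f * τ ^ 2 / ((1 + τ ^ 2) * (m + k * f)) with hxdef
  have hx0 : 0 ≤ x := by positivity
  have hx1 : x < 1 := by
    rw [hxdef, div_lt_one hden]
    nlinarith
  have harg : (k + m) * k * f * τ ^ 2 / (2 * (m + k * f) * (1 + τ ^ 2)) = (k + m) / 2 * x := by
    rw [hxdef]
    field_simp
  rw [BF10F, harg]
  apply mul_le_mul_of_nonneg_left _ (Real.rpow_nonneg (by positivity) _)
  exact exp_le_twoF1 (by positivity) (by linarith) (by positivity) hx0 hx1
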